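/- Let n ≥ 1, let p be a permutation of {1,…,n} and let q be its complement, i.e., q_i = n + 1 − p_i for all i. Then the minmax trees T^m_p and T^m_q have the same shape on positions: for all indices j and k, the entry p_j is a child of the entry p_k in T^m_p if and only if the entry q_j is a child of the entry q_k in T^m_q. In particular, p_i is a leaf of T^m_p if and only if q_i is a leaf of T^m_q. -/

import Mathlib

/-- Binary trees with natural-number labels, used to model minmax trees of
permutations. -/
inductive BTree where
  | nil : BTree
  | node : ℕ → BTree → BTree → BTree
deriving DecidableEq, Repr

namespace BTree

/-- The label of the root (if any). -/
def rootVal : BTree → Option ℕ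
  | .nil => none
  | .node v _ _ => some v

/-- Whether the value `x` occurs as a label in the tree. -/
def memB : BTree → ℕ → Bool
  | .nil, _ => false
  | .node v l r, x => (x == v) || memB l x || memB r x

/-- The number of children of the (unique, for permutations) node labelled `x`. -/
def numChildren : BTree → ℕ → ℕ
  | .nil, _ => 0
  | .node v l r, x =>
      if x = v then (if l = .nil then 0 else 1) + (if r = .nil then 0 else 1)
      else numChildren l x + numChildren r x

/-- `x` is a leaf of the tree: it occurs in the tree and has no children. -/
def IsLeaf (t : BTree) (x : ℕ) : Prop := t.memB x = true ∧ t.numChildren x = 0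

instance (t : BTree) (x : ℕ) : Decidable (t.IsLeaf x) := by unfold IsLeaf; infer_instance

/-- `childB t x y = true` iff `x` is a child of `y` in `t`, i.e. `x` is the root of
the left or the right subtree hanging from `y`. -/
def childB : BTree → ℕ → ℕ → Bool
  | .nil, _, _ => false
  | .node v l r, x, y =>
      ((y == v) && (l.rootVal == some x || r.rootVal == some x))
      || childB l x y || childB r x y

/-- `ancB t x y = true` iff `x` is a (strict) ancestor of `y` in `t`, i.e. `y` lies
in a subtree hanging from `x`. -/
def ancB : BTree → ℕ → ℕ → Bool
  | .nil, _, _ => false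
  | .node v l r, x, y =>
      ((x == v) && (memB l y || memB r y)) || ancB l x y || ancB r x y

end BTree

/-- `x` is the leftmost-eligible extreme letter of `l`: the minimum or the maximum. -/
def isExtreme (l : List ℕ) (x : ℕ) : Bool :=
  (l.min? == some x) || (l.max? == some x)

/-- Fuelled construction of the minmax tree of a list of distinct naturals:
split the list as `u ++ [m] ++ v` where `m` is the leftmost of the minimum and
maximum letters, put `m` at the root and recurse on `u` (left) and `v` (right). -/
def mmAux : ℕ → List ℕ → BTree
  | 0, _ => .nil
  | fuel+1, l =>
    if l.isEmpty then .nil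
    else
      let k := l.findIdx (isExtreme l)
      .node (l.getD k 0) (mmAux fuel (l.take k)) (mmAux fuel (l.drop (k+1)))

/-- The minmax tree `T^m_p` of a word `l` (with distinct letters). -/
def minmaxTree (l : List ℕ) : BTree := mmAux l.length l

/-- The word `p_1 p_2 … p_n` on the letters `{1,…,n}` associated to a permutation
`p` of `Fin n`. -/
def permList (n : ℕ) (p : Equiv.Perm (Fin n)) : List ℕ :=
  List.ofFn (fun i => (p i : ℕ) + 1)

/-- The `i`-th entry `p_i` (1-indexed) of the permutation `p`. -/
def entryAt (n : ℕ) (p : Equiv.Perm (Fin n)) (i : ℕ) : ℕ :=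
  (permList n p).getD (i - 1) 0

section Aux

namespace BTree

/-- Relabel a tree. -/
def mapT (f : ℕ → ℕ) : BTree → BTree
  | .nil => .nil
  | .node v l r => .node (f v) (mapT f l) (mapT f r)

theorem mapT_eq_nil_iff (f : ℕ → ℕ) (t : BTree) : mapT f t = BTree.nil ↔ t = BTree.nil := by
  cases t <;> simp [mapT]

theorem rootVal_mapT (f : ℕ → ℕ) (t : BTree) : (mapT f t).rootVal = t.rootVal.map f := by
  cases t <;> simp [mapT, rootVal]

/-- All labels of the tree are bounded by `N`. -/
def Bdd (N : ℕ) (t : BTree) : Prop := ∀ x, t.memB x = true → x ≤ N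

theorem bdd_node {N v : ℕ} {l r : BTree} (h : Bdd N (.node v l r)) :
    v ≤ N ∧ Bdd N l ∧ Bdd N r := by
  refine ⟨h v (by simp [memB]), fun x hx => h x (by simp [memB, hx]),
    fun x hx => h x (by simp [memB, hx])⟩

theorem memB_mapT {N : ℕ} {f : ℕ → ℕ} (hf : ∀ a b, a ≤ N → b ≤ N → f a = f b → a = b) :
    ∀ (t : BTree), Bdd N t → ∀ x, x ≤ N → (mapT f t).memB (f x) = t.memB x := by
  intro t
  induction t with
  | nil => intro _ x _; rfl
  | node v l r ihl ihr =>
    intro ht x hx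
    obtain ⟨hv, hl, hr⟩ := bdd_node ht
    simp only [mapT, memB, ihl hl x hx, ihr hr x hx]
    congr 2
    by_cases h : x = v
    · simp [h]
    · have : ¬ f x = f v := fun hc => h (hf _ _ hx hv hc)
      simp [h, this]

theorem numChildren_mapT {N : ℕ} {f : ℕ → ℕ}
    (hf : ∀ a b, a ≤ N → b ≤ N → f a = f b → a = b) :
    ∀ (t : BTree), Bdd N t → ∀ x, x ≤ N → (mapT f t).numChildren (f x) = t.numChildren x := by
  intro t
  induction t with
  | nil => intro _ x _; rfl
  | node v l r ihl ihr =>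
    intro ht x hx
    obtain ⟨hv, hl, hr⟩ := bdd_node ht
    simp only [mapT, numChildren]
    by_cases h : x = v
    · simp [h, mapT_eq_nil_iff]
    · have : ¬ f x = f v := fun hc => h (hf _ _ hx hv hc)
      simp [h, this, ihl hl x hx, ihr hr x hx]

theorem childB_mapT {N : ℕ} {f : ℕ → ℕ}
    (hf : ∀ a b, a ≤ N → b ≤ N → f a = f b → a = b) :
    ∀ (t : BTree), Bdd N t → ∀ x y, x ≤ N → y ≤ N →
    (mapT f t).childB (f x) (f y) = t.childB x y := by
  intro t
  induction t with
  | nil => intro _ x y _ _; rfl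
  | node v l r ihl ihr =>
    intro ht x y hx hy
    obtain ⟨hv, hl, hr⟩ := bdd_node ht
    simp only [mapT, childB, ihl hl x y hx hy, ihr hr x y hx hy]
    congr 2
    have hyv : (f y == f v) = (y == v) := by
      by_cases h : y = v
      · simp [h]
      · have : ¬ f y = f v := fun hc => h (hf _ _ hy hv hc)
        simp [h, this]
    have hroot : ∀ s : BTree, Bdd N s →
        ((mapT f s).rootVal == some (f x)) = (s.rootVal == some x) := by
      intro s hs
      cases s with
      | nil => rfl
      | node w a b =>
        have hw : w ≤ N := (bdd_node hs).1
        by_cases h : w = x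
        · simp [mapT, rootVal, h]
        · have : ¬ f w = f x := fun hc => h (hf _ _ hw hx hc)
          simp [mapT, rootVal, h, this]
    rw [hyv, hroot l hl, hroot r hr]

theorem isLeaf_mapT {N : ℕ} {f : ℕ → ℕ}
    (hf : ∀ a b, a ≤ N → b ≤ N → f a = f b → a = b)
    (t : BTree) (ht : Bdd N t) (x : ℕ) (hx : x ≤ N) :
    (mapT f t).IsLeaf (f x) ↔ t.IsLeaf x := by
  unfold IsLeaf
  rw [memB_mapT hf t ht x hx, numChildren_mapT hf t ht x hx]

end BTree

/-- Predicate congruence for findIdx. -/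
theorem findIdx_congr {p q : ℕ → Bool} : ∀ (l : List ℕ), (∀ x ∈ l, p x = q x) →
    l.findIdx p = l.findIdx q := by
  intro l
  induction l with
  | nil => intro _; rfl
  | cons a l ih =>
    intro h
    rw [List.findIdx_cons, List.findIdx_cons, h a (by simp), ih (fun x hx => h x (by simp [hx]))]

theorem min?_map_antitone {c : ℕ → ℕ} (hc : ∀ a b, a ≤ b → c b ≤ c a) (l : List ℕ) :
    (l.map c).min? = l.max?.map c := by
  cases hl : l.max? with
  | none =>
    have : l = [] := by
      cases l with
      | nil => rfl
      | cons a l => simp [List.max?_cons] at hl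
    simp [this]
  | some M =>
    obtain ⟨hM, hMax⟩ := List.max?_eq_some_iff'.mp hl
    rw [Option.map_some, List.min?_eq_some_iff']
    refine ⟨List.mem_map_of_mem (f := c) hM, ?_⟩
    intro b hb
    obtain ⟨y, hy, rfl⟩ := List.mem_map.mp hb
    exact hc _ _ (hMax y hy)

theorem max?_map_antitone {c : ℕ → ℕ} (hc : ∀ a b, a ≤ b → c b ≤ c a) (l : List ℕ) :
    (l.map c).max? = l.min?.map c := by
  cases hl : l.min? with
  | none =>
    have : l = [] := by
      cases l with
      | nil => rfl
      | cons a l => simp [List.min?_cons] at hl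
    simp [this]
  | some M =>
    obtain ⟨hM, hMin⟩ := List.min?_eq_some_iff'.mp hl
    rw [Option.map_some, List.max?_eq_some_iff']
    refine ⟨List.mem_map_of_mem (f := c) hM, ?_⟩
    intro b hb
    obtain ⟨y, hy, rfl⟩ := List.mem_map.mp hb
    exact hc _ _ (hMin y hy)

theorem findIdx_map' (c : ℕ → ℕ) (p : ℕ → Bool) : ∀ (l : List ℕ),
    (l.map c).findIdx p = l.findIdx (fun x => p (c x)) := by
  intro l
  induction l with
  | nil => rfl
  | cons a l ih =>
    simp only [List.map_cons, List.findIdx_cons, ih]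

/-- The complement map. -/
def cmpl (n : ℕ) (x : ℕ) : ℕ := n + 1 - x

theorem cmpl_inj (n : ℕ) {a b : ℕ} (ha : a ≤ n) (hb : b ≤ n) (h : cmpl n a = cmpl n b) :
    a = b := by
  unfold cmpl at h; omega

theorem cmpl_anti (n : ℕ) : ∀ a b, a ≤ b → cmpl n b ≤ cmpl n a := by
  intro a b h; unfold cmpl; omega

theorem isExtreme_map_cmpl (n : ℕ) (l : List ℕ) (hl : ∀ x ∈ l, x ≤ n) (y : ℕ) (hy : y ∈ l) :
    isExtreme (l.map (cmpl n)) (cmpl n y) = isExtreme l y := by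
  unfold isExtreme
  rw [min?_map_antitone (cmpl_anti n), max?_map_antitone (cmpl_anti n)]
  have hne : l ≠ [] := fun h => by simp [h] at hy
  obtain ⟨M, hM⟩ : ∃ M, l.max? = some M := by
    cases l with
    | nil => exact absurd rfl hne
    | cons a l => exact ⟨_, List.max?_cons⟩
  obtain ⟨m, hm⟩ : ∃ m, l.min? = some m := by
    cases l with
    | nil => exact absurd rfl hne
    | cons a l => exact ⟨_, List.min?_cons⟩
  have hMl : M ∈ l := (List.max?_eq_some_iff'.mp hM).1
  have hml : m ∈ l := (List.min?_eq_some_iff'.mp hm).1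
  rw [hM, hm]
  have h1 : (cmpl n M == cmpl n y) = (M == y) := by
    by_cases h : M = y
    · simp [h]
    · have : ¬ cmpl n M = cmpl n y := fun hc => h (cmpl_inj n (hl _ hMl) (hl _ hy) hc)
      simp [h, this]
  have h2 : (cmpl n m == cmpl n y) = (m == y) := by
    by_cases h : m = y
    · simp [h]
    · have : ¬ cmpl n m = cmpl n y := fun hc => h (cmpl_inj n (hl _ hml) (hl _ hy) hc)
      simp [h, this]
  simp only [Option.map_some, Option.some_beq_some, h1, h2]
  rw [Bool.or_comm]

theorem findIdx_lt_of_ne_nil (l : List ℕ) (hne : l ≠ []) :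
    l.findIdx (isExtreme l) < l.length := by
  obtain ⟨m, hm⟩ : ∃ m, l.min? = some m := by
    cases l with
    | nil => exact absurd rfl hne
    | cons a l => exact ⟨_, List.min?_cons⟩
  have hml : m ∈ l := (List.min?_eq_some_iff'.mp hm).1
  exact List.findIdx_lt_length.mpr ⟨m, hml, by simp [isExtreme, hm]⟩

theorem mmAux_succ (fuel : ℕ) (l : List ℕ) (h : l.isEmpty = false) :
    mmAux (fuel + 1) l =
      .node (l.getD (l.findIdx (isExtreme l)) 0)
        (mmAux fuel (l.take (l.findIdx (isExtreme l))))
        (mmAux fuel (l.drop (l.findIdx (isExtreme l) + 1))) := by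
  rw [mmAux]
  simp [h]

theorem mmAux_mem : ∀ (fuel : ℕ) (l : List ℕ) (x : ℕ),
    (mmAux fuel l).memB x = true → x ∈ l := by
  intro fuel
  induction fuel with
  | zero => intro l x h; simp [mmAux, BTree.memB] at h
  | succ fuel ih =>
    intro l x h
    by_cases hemp : l.isEmpty
    · rw [mmAux] at h; simp [hemp, BTree.memB] at h
    · have hemp2 : l.isEmpty = false := by simpa using hemp
      rw [mmAux_succ fuel l hemp2] at h
      simp only [BTree.memB, Bool.or_eq_true, beq_iff_eq] at h
      have hne : l ≠ [] := by simpa [List.isEmpty_iff] using hemp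
      have hk : l.findIdx (isExtreme l) < l.length := findIdx_lt_of_ne_nil l hne
      rcases h with (h | h) | h
      · rw [h, List.getD_eq_getElem l 0 hk]; exact List.getElem_mem hk
      · exact List.take_subset _ l (ih _ x h)
      · exact List.drop_subset _ l (ih _ x h)

theorem mmAux_map_cmpl (n : ℕ) : ∀ (fuel : ℕ) (l : List ℕ), (∀ x ∈ l, x ≤ n) →
    mmAux fuel (l.map (cmpl n)) = BTree.mapT (cmpl n) (mmAux fuel l) := by
  intro fuel
  induction fuel with
  | zero => intro l _; rfl
  | succ fuel ih =>
    intro l hl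
    by_cases hemp : l.isEmpty
    · have : l = [] := List.isEmpty_iff.mp hemp
      subst this
      simp [mmAux, BTree.mapT]
    · have hemp2 : l.isEmpty = false := by simpa using hemp
      have hne : l ≠ [] := by simpa [List.isEmpty_iff] using hemp
      have hemp' : (l.map (cmpl n)).isEmpty = false := by
        cases l with
        | nil => exact absurd rfl hne
        | cons a l => simp
      rw [mmAux_succ fuel l hemp2, mmAux_succ fuel _ hemp']
      have hkeq : (l.map (cmpl n)).findIdx (isExtreme (l.map (cmpl n)))
          = l.findIdx (isExtreme l) := by
        rw [findIdx_map']
        exact findIdx_congr l (fun x hx => isExtreme_map_cmpl n l hl x hx)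
      have hk : l.findIdx (isExtreme l) < l.length := findIdx_lt_of_ne_nil l hne
      have hk' : l.findIdx (isExtreme l) < (l.map (cmpl n)).length := by simpa using hk
      rw [BTree.mapT, hkeq]
      congr 1
      · rw [List.getD_eq_getElem _ 0 hk', List.getD_eq_getElem l 0 hk, List.getElem_map]
      · rw [← List.map_take]
        exact ih _ (fun x hx => hl x (List.take_subset _ l hx))
      · rw [← List.map_drop]
        exact ih _ (fun x hx => hl x (List.drop_subset _ l hx))

end Aux


/-- For `n ≥ 1`, if `q` is the complement of the permutation `p`
(i.e. `q_i = n + 1 − p_i` for all `i`), then the minmax trees of `p` and `q` have the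
same shape on positions: `p_j` is a child of `p_k` iff `q_j` is a child of `q_k`;
in particular `p_i` is a leaf iff `q_i` is a leaf. -/
theorem complement_same_shape (n : ℕ) (hn : 1 ≤ n) (p q : Equiv.Perm (Fin n))
    (hq : ∀ i : Fin n, ((q i : ℕ) + 1) = n + 1 - ((p i : ℕ) + 1)) :
    (∀ j k : ℕ, 1 ≤ j → j ≤ n → 1 ≤ k → k ≤ n →
        ((minmaxTree (permList n p)).childB (entryAt n p j) (entryAt n p k) =
         (minmaxTree (permList n q)).childB (entryAt n q j) (entryAt n q k))) ∧
    (∀ i : ℕ, 1 ≤ i → i ≤ n →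
        ((minmaxTree (permList n p)).IsLeaf (entryAt n p i) ↔
         (minmaxTree (permList n q)).IsLeaf (entryAt n q i))) := by
  have hlenL : (permList n p).length = n := by simp [permList]
  have hLb : ∀ x ∈ permList n p, x ≤ n := by
    intro x hx
    simp only [permList, List.mem_ofFn, Set.mem_range] at hx
    obtain ⟨i, rfl⟩ := hx
    have := (p i).isLt
    omega
  have hqL : permList n q = (permList n p).map (cmpl n) := by
    unfold permList
    rw [List.map_ofFn]
    congr 1
    funext i
    simp only [Function.comp_apply, cmpl]
    exact hq i
  have hT : minmaxTree (permList n q) = BTree.mapT (cmpl n) (minmaxTree (permList n p)) := by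
    rw [hqL]
    unfold minmaxTree
    rw [List.length_map]
    exact mmAux_map_cmpl n (permList n p).length (permList n p) hLb
  have hBdd : BTree.Bdd n (minmaxTree (permList n p)) :=
    fun x hx => hLb x (mmAux_mem _ _ x hx)
  have hf : ∀ a b : ℕ, a ≤ n → b ≤ n → cmpl n a = cmpl n b → a = b :=
    fun a b ha hb h => cmpl_inj n ha hb h
  have hentry : ∀ i : ℕ, 1 ≤ i → i ≤ n →
      entryAt n q i = cmpl n (entryAt n p i) ∧ entryAt n p i ≤ n := by
    intro i h1 h2
    have hi : i - 1 < (permList n p).length := by omega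
    have hi' : i - 1 < ((permList n p).map (cmpl n)).length := by simpa using hi
    constructor
    · unfold entryAt
      rw [hqL, List.getD_eq_getElem _ 0 hi', List.getElem_map,
        List.getD_eq_getElem _ 0 hi]
    · unfold entryAt
      rw [List.getD_eq_getElem _ 0 hi]
      exact hLb _ (List.getElem_mem hi)
  constructor
  · intro j k hj1 hj2 hk1 hk2
    obtain ⟨hqj, hpj⟩ := hentry j hj1 hj2
    obtain ⟨hqk, hpk⟩ := hentry k hk1 hk2
    rw [hT, hqj, hqk]
    exact (BTree.childB_mapT hf _ hBdd _ _ hpj hpk).symm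
  · intro i h1 h2
    obtain ⟨hqi, hpi⟩ := hentry i h1 h2
    rw [hT, hqi]
    exact (BTree.isLeaf_mapT hf _ hBdd _ hpi).symm
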